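/- For any β ∈ (0,1), there is a constant c_β > 0 such that for all real a, b with a ≠ b: ∫₀^∞ |(a−b)·r·1_{r ≤ |a−b|^{-1}} − (sin(ar) − sin(br))| r^{-2} dr ≤ c_β (|a|+|b|)^{1−β} |a−b|^β. -/

import Mathlib

open MeasureTheory Real Set

lemma aux_sin_taylor (x : ℝ) : |x - Real.sin x| ≤ 2 * |x| ^ 3 := by
  rcases le_or_gt |x| 1 with h | h
  · have hb := Real.sin_bound h
    have h1 : |x - Real.sin x| ≤ |Real.sin x - (x - x ^ 3 / 6)| + |x ^ 3 / 6| := by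
      have e : x - Real.sin x = -(Real.sin x - (x - x ^ 3 / 6)) + x ^ 3 / 6 := by ring
      calc |x - Real.sin x| ≤ |-(Real.sin x - (x - x ^ 3 / 6))| + |x ^ 3 / 6| := by
            rw [e]; exact abs_add_le _ _
        _ = |Real.sin x - (x - x ^ 3 / 6)| + |x ^ 3 / 6| := by rw [abs_neg]
    have h2 : |x ^ 3 / 6| = |x| ^ 3 / 6 := by
      rw [abs_div, abs_pow]; norm_num
    have h4 : |x| ^ 4 ≤ |x| ^ 3 := pow_le_pow_of_le_one (abs_nonneg x) h (by norm_num)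
    nlinarith [abs_nonneg x, pow_nonneg (abs_nonneg x) 3]
  · have hs := Real.abs_sin_le_one x
    have h3 : |x| ≤ |x| ^ 3 := by nlinarith [abs_nonneg x, sq_nonneg (|x|-1)]
    calc |x - Real.sin x| ≤ |x| + |Real.sin x| := abs_sub _ _
      _ ≤ 2 * |x| ^ 3 := by nlinarith

lemma aux_sin_lip (x y : ℝ) : |Real.sin x - Real.sin y| ≤ |x - y| := by
  rw [Real.sin_sub_sin]
  have h1 : |Real.sin ((x - y) / 2)| ≤ |(x - y) / 2| := Real.abs_sin_le_abs
  have h2 : |Real.cos ((x + y) / 2)| ≤ 1 := Real.abs_cos_le_one _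
  calc |2 * Real.sin ((x - y) / 2) * Real.cos ((x + y) / 2)|
      = 2 * |Real.sin ((x - y) / 2)| * |Real.cos ((x + y) / 2)| := by
        rw [abs_mul, abs_mul]; norm_num
    _ ≤ 2 * |(x - y) / 2| * 1 := by
        apply mul_le_mul _ h2 (abs_nonneg _) (by positivity)
        exact mul_le_mul_of_nonneg_left h1 (by norm_num)
    _ = |x - y| := by rw [abs_div]; rw [abs_two]; ring

lemma aux_min_interp {A B θ : ℝ} (hA : 0 ≤ A) (hB : 0 ≤ B) (hθ : 0 < θ) (hθ1 : θ < 1) :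
    min A B ≤ A ^ θ * B ^ (1 - θ) := by
  rcases le_total A B with h | h
  · rw [min_eq_left h]
    calc A = A ^ θ * A ^ (1 - θ) := by
          rw [← Real.rpow_add_of_nonneg hA hθ.le (by linarith)]; norm_num
      _ ≤ A ^ θ * B ^ (1 - θ) := by
          have : (0:ℝ) ≤ 1 - θ := by linarith
          gcongr
  · rw [min_eq_right h]
    calc B = B ^ θ * B ^ (1 - θ) := by
          rw [← Real.rpow_add_of_nonneg hB hθ.le (by linarith)]; norm_num
      _ ≤ A ^ θ * B ^ (1 - θ) := by gcongr

/-- Lemma 2.6(ii), sine part: for `β ∈ (0,1)` there is `c_β > 0` such that for `a ≠ b`,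
`∫₀^∞ |(a−b) r 1_{r ≤ |a−b|⁻¹} − (sin(ar) − sin(br))| r^{-2} dr
  ≤ c_β (|a|+|b|)^{1−β} |a−b|^β`. -/
theorem stmt5 (β : ℝ) (hβ : β ∈ Set.Ioo (0:ℝ) 1) :
    ∃ c > (0:ℝ), ∀ a b : ℝ, a ≠ b →
      (∫ r in Set.Ioi (0:ℝ),
          |(if r ≤ |a - b|⁻¹ then (a - b) * r else 0)
              - (Real.sin (a * r) - Real.sin (b * r))| / r ^ (2:ℕ))
        ≤ c * (|a| + |b|) ^ (1 - β) * |a - b| ^ β := by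
  obtain ⟨hβ0, hβ1⟩ := hβ
  set θ : ℝ := (1 - β) / 3 with hθdef
  have hθ0 : 0 < θ := by rw [hθdef]; linarith
  have hθ1 : θ < 1 := by rw [hθdef]; linarith
  have h1β : (0:ℝ) < 1 - β := by linarith
  refine ⟨5 / (1 - β), by positivity, fun a b hab => ?_⟩
  have hδ : 0 < |a - b| := abs_pos.mpr (sub_ne_zero.mpr hab)
  have hδs : |a - b| ≤ |a| + |b| := abs_sub a b
  have hs : 0 < |a| + |b| := hδ.trans_le hδs
  set δ : ℝ := |a - b| with hδdef
  set s : ℝ := |a| + |b| with hsdef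
  set T : ℝ := δ⁻¹ with hTdef
  have hT : 0 < T := inv_pos.mpr hδ
  set C1 : ℝ := 2 * s ^ (1 - β) * δ ^ (1 - θ) with hC1def
  set C2 : ℝ := 2 * δ ^ β with hC2def
  have hC1 : 0 ≤ C1 := by positivity
  have hC2 : 0 ≤ C2 := by positivity
  set h : ℝ → ℝ := fun r => if r ≤ T then C1 * r ^ (2 * θ - 1) else C2 * r ^ (β - 2)
    with hhdef
  set g : ℝ → ℝ := fun r =>
    |(if r ≤ δ⁻¹ then (a - b) * r else 0) - (Real.sin (a * r) - Real.sin (b * r))| / r ^ (2:ℕ)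
    with hgdef
  -- integrability of the two pieces
  have hi1 : IntegrableOn (fun r : ℝ => C1 * r ^ (2 * θ - 1)) (Ioc 0 T) := by
    apply Integrable.const_mul
    have := intervalIntegral.intervalIntegrable_rpow' (r := 2 * θ - 1) (by linarith)
      (a := 0) (b := T)
    rwa [intervalIntegrable_iff_integrableOn_Ioc_of_le hT.le] at this
  have hi2 : IntegrableOn (fun r : ℝ => C2 * r ^ (β - 2)) (Ioi T) := by
    apply Integrable.const_mul
    exact integrableOn_Ioi_rpow_of_lt (by linarith) hT
  have heq1 : EqOn (fun r : ℝ => C1 * r ^ (2 * θ - 1)) h (Ioc 0 T) := by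
    intro r hr
    simp only [hhdef, if_pos hr.2]
  have heq2 : EqOn (fun r : ℝ => C2 * r ^ (β - 2)) h (Ioi T) := by
    intro r hr
    simp only [hhdef, if_neg (not_le.mpr (mem_Ioi.mp hr))]
  have hih1 : IntegrableOn h (Ioc 0 T) := hi1.congr_fun heq1 measurableSet_Ioc
  have hih2 : IntegrableOn h (Ioi T) := hi2.congr_fun heq2 measurableSet_Ioi
  have hsplit : Ioc (0:ℝ) T ∪ Ioi T = Ioi 0 := Ioc_union_Ioi_eq_Ioi hT.le
  have hih : IntegrableOn h (Ioi 0) := by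
    rw [← hsplit]; exact hih1.union hih2
  -- pointwise bound
  have hpt : ∀ r ∈ Ioi (0:ℝ), g r ≤ h r := by
    intro r hr
    have hr0 : (0:ℝ) < r := hr
    rcases le_or_gt r T with hrT | hrT
    · -- small r
      have hE1 : |(a - b) * r - (Real.sin (a * r) - Real.sin (b * r))| ≤ 2 * s ^ 3 * r ^ 3 := by
        have e : (a - b) * r - (Real.sin (a * r) - Real.sin (b * r))
            = (a * r - Real.sin (a * r)) - (b * r - Real.sin (b * r)) := by ring
        have t1 := aux_sin_taylor (a * r)
        have t2 := aux_sin_taylor (b * r)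
        have hab1 : |a * r| = |a| * r := by rw [abs_mul, abs_of_pos hr0]
        have hab2 : |b * r| = |b| * r := by rw [abs_mul, abs_of_pos hr0]
        rw [hab1] at t1; rw [hab2] at t2
        calc |(a - b) * r - (Real.sin (a * r) - Real.sin (b * r))|
            ≤ |a * r - Real.sin (a * r)| + |b * r - Real.sin (b * r)| := by
              rw [e]; exact abs_sub _ _
          _ ≤ 2 * (|a| * r) ^ 3 + 2 * (|b| * r) ^ 3 := by linarith
          _ ≤ 2 * s ^ 3 * r ^ 3 := by
              rw [hsdef]
              nlinarith [mul_nonneg (mul_nonneg (mul_nonneg (abs_nonneg a) (abs_nonneg a))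
                  (abs_nonneg b)) (pow_nonneg hr0.le 3),
                mul_nonneg (mul_nonneg (mul_nonneg (abs_nonneg a) (abs_nonneg b))
                  (abs_nonneg b)) (pow_nonneg hr0.le 3)]
      have hE2 : |(a - b) * r - (Real.sin (a * r) - Real.sin (b * r))| ≤ 2 * δ * r := by
        have t3 : |Real.sin (a * r) - Real.sin (b * r)| ≤ δ * r := by
          calc |Real.sin (a * r) - Real.sin (b * r)| ≤ |a * r - b * r| := aux_sin_lip _ _
            _ = δ * r := by
                rw [show a * r - b * r = (a - b) * r from by ring, abs_mul,
                  abs_of_pos hr0]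
        calc |(a - b) * r - (Real.sin (a * r) - Real.sin (b * r))|
            ≤ |(a - b) * r| + |Real.sin (a * r) - Real.sin (b * r)| := abs_sub _ _
          _ ≤ δ * r + δ * r := by
              refine add_le_add ?_ t3
              rw [abs_mul, abs_of_pos hr0]
          _ = 2 * δ * r := by ring
      have hg1 : g r ≤ 2 * (s ^ 3 * r) := by
        rw [hgdef]
        simp only [if_pos (show r ≤ δ⁻¹ from hrT)]
        rw [div_le_iff₀ (by positivity)]
        calc |(a - b) * r - (Real.sin (a * r) - Real.sin (b * r))| ≤ 2 * s ^ 3 * r ^ 3 := hE1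
          _ = 2 * (s ^ 3 * r) * r ^ 2 := by ring
      have hg2 : g r ≤ 2 * (δ / r) := by
        rw [hgdef]
        simp only [if_pos (show r ≤ δ⁻¹ from hrT)]
        rw [div_le_iff₀ (by positivity)]
        calc |(a - b) * r - (Real.sin (a * r) - Real.sin (b * r))| ≤ 2 * δ * r := hE2
          _ = 2 * (δ / r) * r ^ 2 := by field_simp
      have hmin : g r ≤ 2 * min (s ^ 3 * r) (δ / r) := by
        rcases le_total (s ^ 3 * r) (δ / r) with hc | hc
        · rw [min_eq_left hc]; exact hg1
        · rw [min_eq_right hc]; exact hg2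
      have hinterp := aux_min_interp (A := s ^ 3 * r) (B := δ / r)
        (by positivity) (by positivity) hθ0 hθ1
      have e1 : (s ^ 3 * r) ^ θ = s ^ (1 - β) * r ^ θ := by
        rw [Real.mul_rpow (by positivity) hr0.le, ← Real.rpow_natCast s 3,
          ← Real.rpow_mul hs.le,
          show ((3:ℕ):ℝ) * θ = 1 - β from by push_cast; rw [hθdef]; ring]
      have e2 : (δ / r) ^ (1 - θ) = δ ^ (1 - θ) * r ^ (θ - 1) := by
        rw [Real.div_rpow hδ.le hr0.le, div_eq_mul_inv, ← Real.rpow_neg hr0.le,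
          show -(1 - θ) = θ - 1 from by ring]
      have hrw : (s ^ 3 * r) ^ θ * (δ / r) ^ (1 - θ)
          = s ^ (1 - β) * δ ^ (1 - θ) * r ^ (2 * θ - 1) := by
        calc (s ^ 3 * r) ^ θ * (δ / r) ^ (1 - θ)
            = s ^ (1 - β) * δ ^ (1 - θ) * (r ^ θ * r ^ (θ - 1)) := by rw [e1, e2]; ring
          _ = s ^ (1 - β) * δ ^ (1 - θ) * r ^ (2 * θ - 1) := by
              rw [← Real.rpow_add hr0, show θ + (θ - 1) = 2 * θ - 1 from by ring]
      have hfin : g r ≤ C1 * r ^ (2 * θ - 1) := by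
        calc g r ≤ 2 * min (s ^ 3 * r) (δ / r) := hmin
          _ ≤ 2 * ((s ^ 3 * r) ^ θ * (δ / r) ^ (1 - θ)) := by linarith
          _ = C1 * r ^ (2 * θ - 1) := by rw [hrw, hC1def]; ring
      rw [hhdef]; simp only [if_pos hrT]; exact hfin
    · -- large r
      have hgval : g r = |Real.sin (a * r) - Real.sin (b * r)| / r ^ 2 := by
        rw [hgdef]
        simp only [if_neg (not_le.mpr (show δ⁻¹ < r from hrT))]
        rw [zero_sub, abs_neg]
      have hsin2 : |Real.sin (a * r) - Real.sin (b * r)| ≤ 2 := by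
        calc |Real.sin (a * r) - Real.sin (b * r)|
            ≤ |Real.sin (a * r)| + |Real.sin (b * r)| := abs_sub _ _
          _ ≤ 2 := by
              have := Real.abs_sin_le_one (a * r)
              have := Real.abs_sin_le_one (b * r)
              linarith
      have hδr : 1 < δ * r := by
        calc (1:ℝ) = δ * δ⁻¹ := (mul_inv_cancel₀ hδ.ne').symm
          _ < δ * r := by exact mul_lt_mul_of_pos_left hrT hδ
      have hpow : (1:ℝ) ≤ (δ * r) ^ β := Real.one_le_rpow hδr.le hβ0.le
      have e4 : r ^ (β - 2) = r ^ β / r ^ (2:ℕ) := by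
        rw [show β - 2 = β + -2 from by ring, Real.rpow_add hr0,
          show ((-2:ℝ)) = -((2:ℕ):ℝ) from by norm_num, Real.rpow_neg hr0.le,
          Real.rpow_natCast, div_eq_mul_inv]
      have hrw2 : C2 * r ^ (β - 2) = 2 * (δ * r) ^ β / r ^ (2:ℕ) := by
        rw [hC2def, e4, Real.mul_rpow hδ.le hr0.le]
        ring
      have hfin : g r ≤ C2 * r ^ (β - 2) := by
        rw [hgval, hrw2]
        gcongr
        nlinarith
      rw [hhdef]; simp only [if_neg (not_le.mpr hrT)]; exact hfin
  -- compare integrals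
  have hmono : (∫ r in Ioi (0:ℝ), g r) ≤ ∫ r in Ioi (0:ℝ), h r := by
    apply integral_mono_of_nonneg
    · filter_upwards with r
      rw [hgdef]
      positivity
    · exact hih
    · exact (ae_restrict_iff' measurableSet_Ioi).mpr (Filter.Eventually.of_forall hpt)
  -- compute the integral of h
  have hval1 : ∫ r in Ioc (0:ℝ) T, h r = C1 * (T ^ (2 * θ) / (2 * θ)) := by
    rw [setIntegral_congr_fun measurableSet_Ioc heq1.symm, integral_const_mul]
    rw [← intervalIntegral.integral_of_le hT.le]
    rw [_root_.integral_rpow (Or.inl (by linarith))]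
    rw [show 2 * θ - 1 + 1 = 2 * θ from by ring, Real.zero_rpow (by positivity), sub_zero]
  have hval2 : ∫ r in Ioi T, h r = C2 * (-T ^ (β - 1) / (β - 1)) := by
    rw [setIntegral_congr_fun measurableSet_Ioi heq2.symm, integral_const_mul,
      integral_Ioi_rpow_of_lt (by linarith) hT,
      show β - 2 + 1 = β - 1 from by ring]
  have hint : ∫ r in Ioi (0:ℝ), h r
      = C1 * (T ^ (2 * θ) / (2 * θ)) + C2 * (-T ^ (β - 1) / (β - 1)) := by
    rw [← hsplit, setIntegral_union (Ioc_disjoint_Ioi le_rfl) measurableSet_Ioi hih1 hih2,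
      hval1, hval2]
  -- arithmetic
  have eT1 : T ^ (2 * θ) = δ ^ (-(2 * θ)) := by
    rw [hTdef, Real.inv_rpow hδ.le, ← Real.rpow_neg hδ.le]
  have eT2 : T ^ (β - 1) = δ ^ (1 - β) := by
    rw [hTdef, Real.inv_rpow hδ.le, ← Real.rpow_neg hδ.le,
      show -(β - 1) = 1 - β from by ring]
  have hterm1 : C1 * (T ^ (2 * θ) / (2 * θ)) = 3 / (1 - β) * (s ^ (1 - β) * δ ^ β) := by
    have ed : δ ^ (1 - θ) * δ ^ (-(2 * θ)) = δ ^ β := by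
      rw [← Real.rpow_add hδ, show (1 - θ) + -(2 * θ) = β from by rw [hθdef]; ring]
    rw [hC1def, eT1]
    calc 2 * s ^ (1 - β) * δ ^ (1 - θ) * (δ ^ (-(2 * θ)) / (2 * θ))
        = 1 / θ * (s ^ (1 - β) * (δ ^ (1 - θ) * δ ^ (-(2 * θ)))) := by
          field_simp
      _ = 3 / (1 - β) * (s ^ (1 - β) * δ ^ β) := by
          rw [ed, hθdef, one_div_div]
  have hterm2 : C2 * (-T ^ (β - 1) / (β - 1)) = 2 / (1 - β) * (δ ^ (1 - β) * δ ^ β) := by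
    rw [hC2def, eT2]
    have hne : β - 1 ≠ 0 := by linarith
    have hne' : (1:ℝ) - β ≠ 0 := h1β.ne'
    field_simp
    ring
  have hδpow : δ ^ (1 - β) ≤ s ^ (1 - β) := Real.rpow_le_rpow hδ.le hδs (by linarith)
  calc (∫ r in Ioi (0:ℝ), g r) ≤ ∫ r in Ioi (0:ℝ), h r := hmono
    _ = C1 * (T ^ (2 * θ) / (2 * θ)) + C2 * (-T ^ (β - 1) / (β - 1)) := hint
    _ = 3 / (1 - β) * (s ^ (1 - β) * δ ^ β) + 2 / (1 - β) * (δ ^ (1 - β) * δ ^ β) := by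
        rw [hterm1, hterm2]
    _ ≤ 3 / (1 - β) * (s ^ (1 - β) * δ ^ β) + 2 / (1 - β) * (s ^ (1 - β) * δ ^ β) := by
        gcongr
    _ = 5 / (1 - β) * s ^ (1 - β) * δ ^ β := by ring
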